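/- Let G be the 'backedge graph' of a tournament T: fix an ordering v_1,...,v_n of V(T) and let G be the undirected graph whose edges are the pairs {v_i, v_j} with i < j such that the arc of T goes from v_j to v_i. Then χ⃗(T) ≤ χ(G) ≤ ω(G) · χ⃗(T). -/

import Mathlib

variable {V : Type*}

/-- A tournament: an asymmetric, total relation. -/
def IsTournament (A : V → V → Prop) : Prop :=
  (∀ u v, A u v → ¬ A v u) ∧ (∀ u v, u ≠ v → A u v ∨ A v u)

/-- For an arc `e = uv`, `N(e) = N⁺(v) ∩ N⁻(u)`: vertices `w` with `v → w → u`. -/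
def ArcNbhd (A : V → V → Prop) (u v : V) : Set V := {w | A v w ∧ A w u}

/-- `S` induces an acyclic subdigraph. -/
def AcyclicOn (A : V → V → Prop) (S : Set V) : Prop :=
  ∀ v, ¬ Relation.TransGen (fun x y => x ∈ S ∧ y ∈ S ∧ A x y) v v

/-- The (di)chromatic number of the subdigraph induced on `S` is at most `k`:
`S` is covered by `k` sets, each inducing an acyclic subdigraph. -/
def ChromLE (A : V → V → Prop) (S : Set V) (k : ℕ) : Prop :=
  ∃ C : Fin k → Set V, (∀ v ∈ S, ∃ i, v ∈ C i) ∧ ∀ i, AcyclicOn A (C i ∩ S)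

/-- The (di)chromatic number of the subdigraph induced on `S` is at least `k`. -/
def ChromGE (A : V → V → Prop) (S : Set V) (k : ℕ) : Prop :=
  ∀ m, ChromLE A S m → k ≤ m

/-- Every arc neighborhood has chromatic number at most `t`. -/
def ArcBounded (A : V → V → Prop) (t : ℕ) : Prop :=
  ∀ u v, A u v → ChromLE A (ArcNbhd A u v) t

/-- `P 0, P 1, …, P k` is a directed walk/path. -/
def IsPathOn (A : V → V → Prop) (P : ℕ → V) (k : ℕ) : Prop :=
  ∀ i < k, A (P i) (P (i + 1))

/-- `P 0, …, P k` is a shortest directed path from `P 0` to `P k`. -/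
def IsShortestPath (A : V → V → Prop) (P : ℕ → V) (k : ℕ) : Prop :=
  IsPathOn A P k ∧
    ∀ (m : ℕ) (Q : ℕ → V), Q 0 = P 0 → Q m = P k → IsPathOn A Q m → k ≤ m

def StronglyConnected (A : V → V → Prop) : Prop :=
  ∀ u v : V, Relation.ReflTransGen A u v

def StronglyConnectedOn (A : V → V → Prop) (S : Set V) : Prop :=
  ∀ u ∈ S, ∀ v ∈ S, Relation.ReflTransGen (fun x y => x ∈ S ∧ y ∈ S ∧ A x y) u v

section Aux
set_option linter.unusedSectionVars false

variable [Fintype V] {A : V → V → Prop} {ord : V → ℕ} {G : SimpleGraph V}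

def cliqueSizes (ord : V → ℕ) (G : SimpleGraph V) (S : Set V) (v : V) : Set ℕ :=
  {n | ∃ K : Finset V, G.IsNClique n K ∧ v ∈ K ∧ ↑K ⊆ S ∧ ∀ w ∈ K, ord w ≤ ord v}

noncomputable def fcol (ord : V → ℕ) (G : SimpleGraph V) (S : Set V) (v : V) : ℕ :=
  sSup (cliqueSizes ord G S v)

lemma cliqueSizes_bdd (S : Set V) (v : V) : BddAbove (cliqueSizes ord G S v) := by
  refine ⟨G.cliqueNum, fun n hn => ?_⟩
  obtain ⟨K, hK, -, -, -⟩ := hn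
  have := SimpleGraph.IsClique.card_le_cliqueNum (tc := hK.isClique)
  have := hK.card_eq
  omega

lemma one_mem_cliqueSizes {S : Set V} {v : V} (hv : v ∈ S) : 1 ∈ cliqueSizes ord G S v :=
  ⟨{v}, SimpleGraph.isNClique_singleton.2 rfl, Finset.mem_singleton_self v,
    by simpa using hv, by simp⟩

lemma fcol_mem {S : Set V} {v : V} (hv : v ∈ S) : fcol ord G S v ∈ cliqueSizes ord G S v :=
  Nat.sSup_mem ⟨1, one_mem_cliqueSizes hv⟩ (cliqueSizes_bdd S v)

lemma fcol_pos {S : Set V} {v : V} (hv : v ∈ S) : 1 ≤ fcol ord G S v :=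
  le_csSup (cliqueSizes_bdd S v) (one_mem_cliqueSizes hv)

lemma fcol_le {S : Set V} {v : V} (hv : v ∈ S) : fcol ord G S v ≤ G.cliqueNum := by
  obtain ⟨K, hK, -, -, -⟩ := fcol_mem (ord := ord) (G := G) hv
  have := SimpleGraph.IsClique.card_le_cliqueNum (tc := hK.isClique)
  have := hK.card_eq
  omega

/-- transitivity of a tournament on an acyclic set -/
lemma trans_on (hT : IsTournament A) {S : Set V} (hS : AcyclicOn A S)
    {x y z : V} (hx : x ∈ S) (hy : y ∈ S) (hz : z ∈ S)
    (hxy : A x y) (hyz : A y z) : A x z := by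
  rcases eq_or_ne x z with rfl | hne
  · exact absurd ((Relation.TransGen.single ⟨hx, hy, hxy⟩).tail ⟨hy, hz, hyz⟩) (hS x)
  rcases hT.2 x z hne with h | h
  · exact h
  · exact absurd (((Relation.TransGen.single ⟨hz, hx, h⟩).tail
      ⟨hx, hy, hxy⟩).tail ⟨hy, hz, hyz⟩) (hS z)

lemma fcol_lt (hT : IsTournament A) (hord : Function.Injective ord)
    (hG : ∀ x y, G.Adj x y ↔ ((ord x < ord y ∧ A y x) ∨ (ord y < ord x ∧ A x y)))
    {S : Set V} (hS : AcyclicOn A S) {x y : V} (hx : x ∈ S) (hy : y ∈ S)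
    (hadj : G.Adj x y) (hlt : ord x < ord y) : fcol ord G S x < fcol ord G S y := by
  classical
  obtain ⟨K, hK, hxK, hKS, hKord⟩ := fcol_mem (ord := ord) (G := G) hx
  have hAyx : A y x := by
    rcases (hG x y).1 hadj with ⟨-, h⟩ | ⟨h, -⟩
    · exact h
    · omega
  have hyK : y ∉ K := fun h => absurd (hKord y h) (by omega)
  have hclique : G.IsNClique (fcol ord G S x + 1) (insert y K) := by
    constructor
    · intro a ha b hb hab
      simp only [Finset.coe_insert, Set.mem_insert_iff] at ha hb
      rcases ha with rfl | haK
      · rcases hb with rfl | hbK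
        · exact absurd rfl hab
        · -- Adj y b, b ∈ K
          rcases eq_or_ne b x with rfl | hbx
          · exact hadj.symm
          · have hblt : ord b < ord x := lt_of_le_of_ne (hKord b hbK)
              (fun h => hbx (hord h))
            have hAxb : A x b := by
              rcases (hG b x).1 (hK.isClique hbK hxK hbx) with ⟨-, h⟩ | ⟨h, -⟩
              · exact h
              · omega
            have : A a b := trans_on hT hS hy hx (hKS hbK) hAyx hAxb
            exact (hG a b).2 (Or.inr ⟨by omega, this⟩)
      · rcases hb with rfl | hbK
        · rcases eq_or_ne a x with rfl | hax
          · exact hadj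
          · have halt : ord a < ord x := lt_of_le_of_ne (hKord a haK)
              (fun h => hax (hord h))
            have hAxa : A x a := by
              rcases (hG a x).1 (hK.isClique haK hxK hax) with ⟨-, h⟩ | ⟨h, -⟩
              · exact h
              · omega
            have : A b a := trans_on hT hS hy hx (hKS haK) hAyx hAxa
            exact (hG a b).2 (Or.inl ⟨by omega, this⟩)
        · exact hK.isClique haK hbK hab
    · rw [Finset.card_insert_of_notMem hyK, hK.card_eq]
  have : fcol ord G S x + 1 ∈ cliqueSizes ord G S y := by
    refine ⟨insert y K, hclique, Finset.mem_insert_self y K, ?_, ?_⟩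
    · intro a ha
      simp only [Finset.coe_insert, Set.mem_insert_iff] at ha
      rcases ha with rfl | haK
      · exact hy
      · exact hKS haK
    · intro w hw
      rcases Finset.mem_insert.1 hw with rfl | hwK
      · exact le_rfl
      · exact le_trans (hKord w hwK) (by omega)
  have h2 : fcol ord G S x + 1 ≤ fcol ord G S y := le_csSup (cliqueSizes_bdd S y) this
  omega

end Aux

theorem stmt14 [Fintype V] (A : V → V → Prop) (hT : IsTournament A)
    (ord : V → ℕ) (hord : Function.Injective ord) (G : SimpleGraph V)
    (hG : ∀ x y, G.Adj x y ↔
      ((ord x < ord y ∧ A y x) ∨ (ord y < ord x ∧ A x y))) :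
    (∀ m : ℕ, G.Colorable m → ChromLE A Set.univ m) ∧
      (∀ k : ℕ, ChromLE A Set.univ k → G.Colorable (G.cliqueNum * k)) := by
  constructor
  · rintro m ⟨c⟩
    refine ⟨fun i => {v | c v = i}, fun v _ => ⟨c v, rfl⟩, fun i v hcyc => ?_⟩
    have step : ∀ x y : V, (x ∈ {v | c v = i} ∩ Set.univ ∧ y ∈ {v | c v = i} ∩ Set.univ ∧ A x y)
        → ord x < ord y := by
      rintro x y ⟨⟨hx, -⟩, ⟨hy, -⟩, hA⟩
      have hne : x ≠ y := fun h => hT.1 x y hA (h ▸ hA)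
      have hnadj : ¬ G.Adj x y := fun h => c.valid h (hx.trans hy.symm)
      have := (hG x y).not.1 hnadj
      push_neg at this
      rcases (hord.ne hne).lt_or_gt with h | h
      · exact h
      · exact absurd hA (this.2 h)
    have key : ∀ a b : V, Relation.TransGen (fun x y => ord x < ord y) a b →
        ord a < ord b := by
      intro a b h
      induction h with
      | single h => exact h
      | tail _ h ih => omega
    have := key v v (Relation.TransGen.mono (fun x y h => step x y h) v v hcyc)
    omega
  · rintro k ⟨C, hcov, hacy⟩
    by_cases hne : Nonempty V
    · obtain ⟨v0⟩ := hne
      choose iv hiv using fun v : V => hcov v trivial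
      have hk : 0 < k := (iv v0).pos
      have hω : 1 ≤ G.cliqueNum := by
        have h1 : G.IsClique ({v0} : Finset V) := by simp
        have := SimpleGraph.IsClique.card_le_cliqueNum (tc := h1)
        simpa using this
      set ω := G.cliqueNum with hωdef
      have hmem : ∀ v, v ∈ C (iv v) ∩ Set.univ := fun v => ⟨hiv v, trivial⟩
      set F : V → ℕ := fun v => fcol ord G (C (iv v) ∩ Set.univ) v with hF
      have hf1 : ∀ v, 1 ≤ F v := fun v => fcol_pos (hmem v)
      have hfω : ∀ v, F v ≤ ω := fun v => fcol_le (hmem v)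
      set c : V → ℕ := fun v => ω * (iv v : ℕ) + (F v - 1) with hc
      have hceq : ∀ v, c v = ω * (iv v : ℕ) + (F v - 1) := fun v => rfl
      have hbound : ∀ v, c v < ω * k := by
        intro v
        have h1 : c v < ω * ((iv v : ℕ) + 1) := by
          have := hf1 v; have := hfω v
          rw [hceq, Nat.mul_add, Nat.mul_one]
          omega
        exact h1.trans_le (Nat.mul_le_mul_left ω (iv v).2)
      have hdiv : ∀ v, c v / ω = (iv v : ℕ) := by
        intro v
        rw [hceq, Nat.mul_add_div (by omega),
          Nat.div_eq_of_lt (by have := hf1 v; have := hfω v; omega)]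
        omega
      have hvalid : ∀ x y : V, G.Adj x y → c x ≠ c y := by
        intro x y hadj hcxy
        have hivxy : iv x = iv y :=
          Fin.val_injective (by rw [← hdiv x, ← hdiv y, hcxy])
        have hfxy : F x = F y := by
          have := hf1 x; have := hf1 y
          rw [hceq, hceq, hivxy] at hcxy
          omega
        have hfxy2 : fcol ord G (C (iv x) ∩ Set.univ) x
            = fcol ord G (C (iv x) ∩ Set.univ) y := by
          rw [show fcol ord G (C (iv x) ∩ Set.univ) y
            = fcol ord G (C (iv y) ∩ Set.univ) y by rw [hivxy]]
          exact hfxy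
        have hSy : y ∈ C (iv x) ∩ Set.univ := by rw [hivxy]; exact hmem y
        rcases (hord.ne hadj.ne).lt_or_gt with h | h
        · have := fcol_lt hT hord hG (hacy (iv x)) (hmem x) hSy hadj h
          omega
        · have := fcol_lt hT hord hG (hacy (iv x)) hSy (hmem x) hadj.symm h
          omega
      refine ⟨⟨fun v => ⟨c v, by rw [mul_comm] at *; exact hbound v⟩, ?_⟩⟩
      intro x y hadj h
      exact hvalid x y hadj (by simpa [Fin.mk.injEq] using h)
    · exact ⟨⟨fun v => absurd ⟨v⟩ hne, fun {x} => absurd ⟨x⟩ hne⟩⟩
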